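/- Let G be a semiregular groupoid with vertex monoid V(G). Define two binary operations on G by α ∗ β = (α ◁ βd) ∘ (αr ▷ β) and α ⊛ β = (αd ▷ β) ∘ (α ◁ βr). Then each of ∗ and ⊛ is an everywhere-defined associative operation making G a monoid with identity 1_e, where e is the identity of V(G). -/
import Mathlib


/-- A semiregular groupoid: a groupoid (given algebraically by its set of arrows `G`
over a vertex monoid `V`, with totalised composition `comp` whose axioms are guarded by
the composability condition `r α = d β`) together with left and right actions of the
vertex monoid `V` on arrows, satisfying the axioms of Definition 2.1. -/
structure SemiregularGroupoid (V : Type*) [Monoid V] (G : Type*) where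
  d : G → V
  r : G → V
  comp : G → G → G
  id : V → G
  inv : G → G
  d_id : ∀ v, d (id v) = v
  r_id : ∀ v, r (id v) = v
  d_comp : ∀ α β, r α = d β → d (comp α β) = d α
  r_comp : ∀ α β, r α = d β → r (comp α β) = r β
  comp_assoc : ∀ α β γ, r α = d β → r β = d γ →
    comp (comp α β) γ = comp α (comp β γ)
  id_comp : ∀ α, comp (id (d α)) α = α
  comp_id : ∀ α, comp α (id (r α)) = α
  d_inv : ∀ α, d (inv α) = r α
  r_inv : ∀ α, r (inv α) = d α
  comp_inv : ∀ α, comp α (inv α) = id (d α)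
  inv_comp : ∀ α, comp (inv α) α = id (r α)
  actL : V → G → G
  actR : G → V → G
  actL_mul : ∀ x y α, actL (x * y) α = actL x (actL y α)
  actR_mul : ∀ α x y, actR α (x * y) = actR (actR α x) y
  actL_actR : ∀ x α y, actR (actL x α) y = actL x (actR α y)
  one_actL : ∀ α, actL 1 α = α
  actR_one : ∀ α, actR α 1 = α
  d_actL : ∀ x α, d (actL x α) = x * d α
  d_actR : ∀ α x, d (actR α x) = d α * x
  r_actL : ∀ x α, r (actL x α) = x * r α
  r_actR : ∀ α x, r (actR α x) = r α * x
  actL_comp : ∀ x α β, r α = d β → actL x (comp α β) = comp (actL x α) (actL x β)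
  actR_comp : ∀ α β x, r α = d β → actR (comp α β) x = comp (actR α x) (actR β x)
  actL_id : ∀ x y, actL x (id y) = id (x * y)
  actR_id : ∀ x y, actR (id x) y = id (x * y)

/-- The operation `α ∗ β = (α ◁ βd) ∘ (αr ▷ β)`. -/
def SemiregularGroupoid.star {V : Type*} [Monoid V] {G : Type*}
    (S : SemiregularGroupoid V G) (α β : G) : G :=
  S.comp (S.actR α (S.d β)) (S.actL (S.r α) β)

/-- The operation `α ⊛ β = (αd ▷ β) ∘ (α ◁ βr)`. -/
def SemiregularGroupoid.ostar {V : Type*} [Monoid V] {G : Type*}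
    (S : SemiregularGroupoid V G) (α β : G) : G :=
  S.comp (S.actL (S.d α) β) (S.actR α (S.r β))

/-- in a semiregular groupoid, the operations `∗` and `⊛` are everywhere
defined associative operations making `G` into a monoid with identity `1_e`, where `e`
is the identity of the vertex monoid `V`. -/
theorem stmt6 {V : Type*} [Monoid V] {G : Type*} (S : SemiregularGroupoid V G) :
    (∀ α β γ : G, S.star (S.star α β) γ = S.star α (S.star β γ)) ∧
    (∀ α : G, S.star (S.id 1) α = α ∧ S.star α (S.id 1) = α) ∧
    (∀ α β γ : G, S.ostar (S.ostar α β) γ = S.ostar α (S.ostar β γ)) ∧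
    (∀ α : G, S.ostar (S.id 1) α = α ∧ S.ostar α (S.id 1) = α) := by
  have hcS : ∀ α β : G, S.r (S.actR α (S.d β)) = S.d (S.actL (S.r α) β) := by
    intro α β; rw [S.r_actR, S.d_actL]
  have hcO : ∀ α β : G, S.r (S.actL (S.d α) β) = S.d (S.actR α (S.r β)) := by
    intro α β; rw [S.r_actL, S.d_actR]
  refine ⟨?_, ?_, ?_, ?_⟩
  · intro α β γ
    simp only [SemiregularGroupoid.star]
    rw [S.actR_comp _ _ _ (hcS α β), S.actL_comp _ _ _ (hcS β γ),
        S.r_comp _ _ (hcS α β), S.d_comp _ _ (hcS β γ),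
        ← S.actR_mul, S.r_actL, S.d_actR, ← S.actL_actR, ← S.actL_mul]
    have h1 : S.r (S.actR α (S.d β * S.d γ)) = S.d (S.actR (S.actL (S.r α) β) (S.d γ)) := by
      rw [S.r_actR, S.d_actR, S.d_actL, mul_assoc]
    have h2 : S.r (S.actR (S.actL (S.r α) β) (S.d γ)) = S.d (S.actL (S.r α * S.r β) γ) := by
      rw [S.r_actR, S.r_actL, S.d_actL]
    rw [S.comp_assoc _ _ _ h1 h2]
  · intro α
    constructor
    · simp only [SemiregularGroupoid.star]
      rw [S.actR_id, S.r_id, S.one_actL, one_mul, S.id_comp]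
    · simp only [SemiregularGroupoid.star]
      rw [S.d_id, S.actR_one, S.actL_id, mul_one, S.comp_id]
  · intro α β γ
    simp only [SemiregularGroupoid.ostar]
    rw [S.actL_comp _ _ _ (hcO β γ), S.actR_comp _ _ _ (hcO α β),
        S.d_comp _ _ (hcO α β), S.r_comp _ _ (hcO β γ),
        ← S.actL_mul, S.d_actL, S.r_actR, S.actL_actR, ← S.actR_mul]
    have h1 : S.r (S.actL (S.d α * S.d β) γ) = S.d (S.actL (S.d α) (S.actR β (S.r γ))) := by
      rw [S.r_actL, S.d_actL, S.d_actR, mul_assoc]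
    have h2 : S.r (S.actL (S.d α) (S.actR β (S.r γ))) = S.d (S.actR α (S.r β * S.r γ)) := by
      rw [S.r_actL, S.r_actR, S.d_actR]
    rw [S.comp_assoc _ _ _ h1 h2]
  · intro α
    constructor
    · simp only [SemiregularGroupoid.ostar]
      rw [S.d_id, S.one_actL, S.actR_id, one_mul, S.comp_id]
    · simp only [SemiregularGroupoid.ostar]
      rw [S.r_id, S.actR_one, S.actL_id, mul_one, S.id_comp]
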